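/- arXiv:2310.11580 — 2 statements merged into one kernel-verified Lean document; each statement's English description precedes it below -/
import Mathlib

section
/- Let G and H be graphs on the same vertex set such that every vertex v ∈ V(H) has degree at most d in both H and G. If there is a collection F of at least 4d+1 linear forests covering the edges of G, then there is a collection of |F| linear forests covering the edges of G ∪ H. -/
open SimpleGraph Set

namespace Paper

variable {V : Type*}

/-- Degree of a vertex, via the cardinality of its neighbour set. -/
noncomputable def deg (G : SimpleGraph V) (v : V) : ℕ := (G.neighborSet v).ncard

/-- A linear forest: an acyclic graph of maximum degree at most 2,
i.e. a disjoint union of paths. -/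
def IsLinearForest (G : SimpleGraph V) : Prop :=
  G.IsAcyclic ∧ ∀ v, deg G v ≤ 2

/-- Maximum degree. -/
noncomputable def maxDeg [Fintype V] (G : SimpleGraph V) : ℕ :=
  Finset.univ.sup fun v => deg G v

/-- Minimum degree. -/
noncomputable def minDeg [Fintype V] [Nonempty V] (G : SimpleGraph V) : ℕ :=
  Finset.univ.inf' Finset.univ_nonempty (deg G)

/-- A bipartition of a graph. -/
def IsBipartition (G : SimpleGraph V) (A B : Set V) : Prop :=
  Disjoint A B ∧ A ∪ B = Set.univ ∧
    ∀ u v, G.Adj u v → (u ∈ A ∧ v ∈ B) ∨ (u ∈ B ∧ v ∈ A)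

/-- The number of nontrivial (path) components of a linear forest. -/
noncomputable def numComponents (F : SimpleGraph V) : ℕ :=
  Nat.card {c : F.ConnectedComponent // (F.support ∩ c.supp).Nonempty}

private lemma deg_le_of_le [Fintype V] {G G' : SimpleGraph V} (h : G ≤ G') (v : V) :
    deg G v ≤ deg G' v :=
  Set.ncard_le_ncard (fun _ hw => h hw) (Set.toFinite _)

private lemma isAcyclic_of_le {G G' : SimpleGraph V} (h : G ≤ G') (hG' : G'.IsAcyclic) :
    G.IsAcyclic := fun _ c hc => hG' (c.mapLe h) (hc.mapLe h)

private lemma exists_two_neighbors {J : SimpleGraph V} {a : V} {c : J.Walk a a}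
    (hc : c.IsCycle) : ∃ x y, x ≠ y ∧ J.Adj a x ∧ J.Adj a y := by
  cases c with
  | nil => exact absurd hc Walk.IsCycle.not_of_nil
  | @cons _ b _ h p =>
    rw [Walk.cons_isCycle_iff] at hc
    obtain ⟨hp, he⟩ := hc
    have hnn : ¬ p.reverse.Nil := Walk.not_nil_of_ne (fun hEq => h.ne hEq)
    obtain ⟨x, h2, q, hq⟩ := Walk.not_nil_iff.mp hnn
    refine ⟨x, b, ?_, h2, h⟩
    rintro rfl
    apply he
    have hx : s(a, x) ∈ p.reverse.edges := by
      rw [hq, Walk.edges_cons]; exact List.mem_cons_self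
    rwa [Walk.edges_reverse, List.mem_reverse] at hx

private lemma no_cycle_through_deg_le_one [Fintype V] {J : SimpleGraph V} {v a : V}
    {c : J.Walk v v} (hc : c.IsCycle) (ha : a ∈ c.support)
    (hdeg : (J.neighborSet a).ncard ≤ 1) : False := by
  classical
  obtain ⟨x, y, hxy, hx, hy⟩ := exists_two_neighbors (hc.rotate ha)
  have h2 : 1 < (J.neighborSet a).ncard :=
    (Set.one_lt_ncard_iff (Set.toFinite _)).mpr ⟨x, y, hx, hy, hxy⟩
  omega

/-- merging a low-degree graph `H` into a cover of `G` by
at least `4d+1` linear forests. -/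
theorem extend_cover_by_low_degree_graph [Fintype V]
    (G H : SimpleGraph V) (d m : ℕ)
    (hH : ∀ v ∈ H.support, deg H v ≤ d ∧ deg G v ≤ d)
    (hm : 4 * d + 1 ≤ m)
    (F : Fin m → SimpleGraph V)
    (hF : ∀ i, F i ≤ G ∧ IsLinearForest (F i))
    (hcov : G.edgeSet ⊆ ⋃ i, (F i).edgeSet) :
    ∃ F' : Fin m → SimpleGraph V,
      (∀ i, F' i ≤ G ⊔ H ∧ IsLinearForest (F' i)) ∧
      (G ⊔ H).edgeSet ⊆ ⋃ i, (F' i).edgeSet := by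
  classical
  have hm0 : 0 < m := by omega
  have hex : ∀ e ∈ G.edgeSet, ∃ i, e ∈ (F i).edgeSet := fun e he => Set.mem_iUnion.mp (hcov he)
  set idx : Sym2 V → Fin m :=
    fun e => if he : e ∈ G.edgeSet then (hex e he).choose else ⟨0, hm0⟩ with hidx
  have hidxmem : ∀ e, ∀ he : e ∈ G.edgeSet, e ∈ (F (idx e)).edgeSet := by
    intro e he
    simp only [hidx, dif_pos he]
    exact (hex e he).choose_spec
  set K : Fin m → SimpleGraph V :=
    fun i => fromEdgeSet {e | e ∈ G.edgeSet ∧ idx e = i} with hKdef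
  have hKadj : ∀ i u v, (K i).Adj u v ↔ s(u, v) ∈ G.edgeSet ∧ idx s(u, v) = i := by
    intro i u v
    constructor
    · intro h
      exact ((fromEdgeSet_adj _).mp h).1
    · intro h
      exact (fromEdgeSet_adj _).mpr ⟨h, ((mem_edgeSet G).mp h.1).ne⟩
  have hKle : ∀ i, K i ≤ F i := by
    intro i u v h
    obtain ⟨hG, hi⟩ := (hKadj i u v).mp h
    have h2 := hidxmem _ hG
    rw [hi] at h2
    exact (mem_edgeSet _).mp h2
  have hKleG : ∀ i, K i ≤ G := fun i => (hKle i).trans (hF i).1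
  have hKdisj : ∀ i j u v, (K i).Adj u v → (K j).Adj u v → i = j := by
    intro i j u v h1 h2
    rw [hKadj] at h1 h2
    rw [← h1.2, h2.2]
  have hKcov : ∀ e ∈ G.edgeSet, e ∈ (K (idx e)).edgeSet := by
    intro e he
    rw [hKdef]
    rw [edgeSet_fromEdgeSet]
    exact ⟨⟨he, rfl⟩, G.not_isDiag_of_mem_edgeSet he⟩
  -- counting: number of forests in which `u` is not isolated
  have hcountK : ∀ u : V,
      (Finset.univ.filter fun i => ((K i).neighborSet u).Nonempty).card ≤ deg G u := by
    intro u
    rw [deg, Set.ncard_eq_toFinset_card']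
    apply Finset.card_le_card_of_injOn
      (fun i => if h : ((K i).neighborSet u).Nonempty then h.choose else u)
    · intro i hi
      simp only [Finset.coe_filter, Finset.mem_filter, Set.mem_setOf_eq, Finset.mem_univ, true_and] at hi
      simp only [dif_pos hi]
      have hadj : (K i).Adj u hi.choose := hi.choose_spec
      have : G.Adj u hi.choose := hKleG i hadj
      simpa using this
    · intro i hi j hj hij
      simp only [Finset.coe_filter, Set.mem_setOf_eq, Finset.mem_univ, true_and] at hi hj
      simp only [dif_pos hi, dif_pos hj] at hij
      have h1 : (K i).Adj u hi.choose := hi.choose_spec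
      have h2 : (K j).Adj u hj.choose := hj.choose_spec
      rw [hij] at h1
      exact hKdisj i j _ _ h1 h2
  -- the greedy assignment of the edges of `H`
  have key : ∀ S : Finset (Sym2 V), ↑S ⊆ H.edgeSet →
      ∃ M : Fin m → Finset (Sym2 V),
        (∀ i, ∀ e ∈ M i, e ∈ S) ∧
        (∀ e ∈ S, ∃ i, e ∈ M i) ∧
        (∀ i j e, e ∈ M i → e ∈ M j → i = j) ∧
        (∀ i, ∀ e ∈ M i, ∀ w ∈ e, (K i).neighborSet w = ∅) ∧
        (∀ i, ∀ e ∈ M i, ∀ e' ∈ M i, e ≠ e' → ∀ w ∈ e, w ∉ e') := by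
    intro S
    induction S using Finset.induction_on with
    | empty =>
      intro _
      exact ⟨fun _ => ∅, by simp, by simp, by simp, by simp, by simp⟩
    | @insert a S ha ih =>
      induction a using Sym2.ind with
      | _ u v =>
      intro hsub
      have hS : ↑S ⊆ H.edgeSet := fun e he => hsub (by simp [he])
      obtain ⟨M, P0, P2, P3, P4, P5⟩ := ih hS
      have huv : H.Adj u v := by
        have h := hsub (by simp : s(u, v) ∈ (↑(insert s(u, v) S) : Set (Sym2 V)))
        rwa [mem_edgeSet] at h
      have hu : u ∈ H.support := ⟨v, huv⟩
      have hv : v ∈ H.support := ⟨u, huv.symm⟩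
      -- counting: number of forests whose `M`-part touches `w`
      have hcountM : ∀ w : V,
          (Finset.univ.filter fun i => ∃ e ∈ M i, w ∈ e).card ≤ deg H w := by
        intro w
        rw [deg, Set.ncard_eq_toFinset_card']
        apply Finset.card_le_card_of_injOn
          (fun i => if h : ∃ e ∈ M i, w ∈ e then Sym2.Mem.other h.choose_spec.2 else w)
        · intro i hi
          simp only [Finset.coe_filter, Finset.mem_filter, Set.mem_setOf_eq, Finset.mem_univ, true_and] at hi
          simp only [dif_pos hi]
          have hsp := Sym2.other_spec hi.choose_spec.2
          have hmem : hi.choose ∈ H.edgeSet := hS (P0 i _ hi.choose_spec.1)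
          rw [← hsp] at hmem
          simpa using (mem_edgeSet H).mp hmem
        · intro i hi j hj hij
          simp only [Finset.coe_filter, Set.mem_setOf_eq, Finset.mem_univ, true_and] at hi hj
          simp only [dif_pos hi, dif_pos hj] at hij
          have hsi := Sym2.other_spec hi.choose_spec.2
          have hsj := Sym2.other_spec hj.choose_spec.2
          rw [hij] at hsi
          have heq : hi.choose = hj.choose := by rw [← hsi, hsj]
          exact P3 i j hi.choose hi.choose_spec.1 (by rw [heq]; exact hj.choose_spec.1)
      -- find a good forest index
      set B : Finset (Fin m) :=
        ((Finset.univ.filter fun i => ((K i).neighborSet u).Nonempty) ∪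
          (Finset.univ.filter fun i => ((K i).neighborSet v).Nonempty)) ∪
        ((Finset.univ.filter fun i => ∃ e ∈ M i, u ∈ e) ∪
          (Finset.univ.filter fun i => ∃ e ∈ M i, v ∈ e)) with hBdef
      have hBcard : B.card ≤ 4 * d := by
        have c1 := (hcountK u).trans (hH u hu).2
        have c2 := (hcountK v).trans (hH v hv).2
        have c3 := (hcountM u).trans (hH u hu).1
        have c4 := (hcountM v).trans (hH v hv).1
        have h1 := Finset.card_union_le
          (Finset.univ.filter fun i => ((K i).neighborSet u).Nonempty)
          (Finset.univ.filter fun i => ((K i).neighborSet v).Nonempty)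
        have h2 := Finset.card_union_le
          (Finset.univ.filter fun i => ∃ e ∈ M i, u ∈ e)
          (Finset.univ.filter fun i => ∃ e ∈ M i, v ∈ e)
        have h3 := Finset.card_union_le
          ((Finset.univ.filter fun i => ((K i).neighborSet u).Nonempty) ∪
            (Finset.univ.filter fun i => ((K i).neighborSet v).Nonempty))
          ((Finset.univ.filter fun i => ∃ e ∈ M i, u ∈ e) ∪
            (Finset.univ.filter fun i => ∃ e ∈ M i, v ∈ e))
        rw [← hBdef] at h3
        omega
      have hgood : ∃ i : Fin m, i ∉ B := by
        by_contra hcon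
        push_neg at hcon
        have : (Finset.univ : Finset (Fin m)) ⊆ B := fun i _ => hcon i
        have hcard := Finset.card_le_card this
        rw [Finset.card_univ, Fintype.card_fin] at hcard
        omega
      obtain ⟨i, hi⟩ := hgood
      rw [hBdef] at hi
      simp only [Finset.mem_union, Finset.mem_filter, Finset.mem_univ, true_and,
        not_or] at hi
      obtain ⟨⟨hi1, hi2⟩, hi3, hi4⟩ := hi
      set M' : Fin m → Finset (Sym2 V) :=
        fun j => if j = i then insert s(u, v) (M i) else M j with hM'def
      have hM'i : M' i = insert s(u, v) (M i) := by simp [hM'def]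
      have hM'ne : ∀ j, j ≠ i → M' j = M j := by intro j h; simp [hM'def, h]
      have hM'mem : ∀ j e, e ∈ M' j → (e = s(u, v) ∧ j = i) ∨ e ∈ M j := by
        intro j e he
        by_cases hji : j = i
        · subst hji
          rw [hM'i, Finset.mem_insert] at he
          rcases he with rfl | he
          · exact Or.inl ⟨rfl, rfl⟩
          · exact Or.inr he
        · rw [hM'ne j hji] at he
          exact Or.inr he
      refine ⟨M', ?_, ?_, ?_, ?_, ?_⟩
      · intro j e he
        rcases hM'mem j e he with ⟨rfl, rfl⟩ | he
        · exact Finset.mem_insert_self _ _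
        · exact Finset.mem_insert_of_mem (P0 j e he)
      · intro e he
        rw [Finset.mem_insert] at he
        rcases he with rfl | he
        · exact ⟨i, by rw [hM'i]; exact Finset.mem_insert_self _ _⟩
        · obtain ⟨j, hj⟩ := P2 e he
          refine ⟨j, ?_⟩
          by_cases hji : j = i
          · subst hji
            rw [hM'i]
            exact Finset.mem_insert_of_mem hj
          · rwa [hM'ne j hji]
      · intro j k e hej hek
        rcases hM'mem j e hej with ⟨rfl, rfl⟩ | hj
        · rcases hM'mem k _ hek with ⟨_, rfl⟩ | hk
          · rfl
          · exact absurd (P0 k _ hk) ha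
        · rcases hM'mem k _ hek with ⟨rfl, rfl⟩ | hk
          · exact absurd (P0 j _ hj) ha
          · exact P3 j k e hj hk
      · intro j e he w hw
        rcases hM'mem j e he with ⟨rfl, rfl⟩ | he
        · rw [Sym2.mem_iff] at hw
          rcases hw with rfl | rfl
          · exact Set.not_nonempty_iff_eq_empty.mp hi1
          · exact Set.not_nonempty_iff_eq_empty.mp hi2
        · exact P4 j e he w hw
      · intro j e he e' he' hne w hw
        rcases hM'mem j e he with ⟨rfl, rfl⟩ | he2
        · rcases hM'mem _ e' he' with ⟨rfl, _⟩ | he2'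
          · exact absurd rfl hne
          · rw [Sym2.mem_iff] at hw
            intro hw'
            rcases hw with rfl | rfl
            · exact hi3 ⟨e', he2', hw'⟩
            · exact hi4 ⟨e', he2', hw'⟩
        · rcases hM'mem j e' he' with ⟨rfl, rfl⟩ | he2'
          · intro hw'
            rw [Sym2.mem_iff] at hw'
            rcases hw' with rfl | rfl
            · exact hi3 ⟨e, he2, hw⟩
            · exact hi4 ⟨e, he2, hw⟩
          · exact P5 j e he2 e' he2' hne w hw
  -- apply the greedy claim to all edges of `H`
  obtain ⟨M, P0, P2, P3, P4, P5⟩ := key H.edgeSet.toFinite.toFinset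
    (by rw [Set.Finite.coe_toFinset])
  have hMH : ∀ i, ∀ e ∈ M i, e ∈ H.edgeSet := by
    intro i e he
    have := P0 i e he
    rwa [Set.Finite.mem_toFinset] at this
  refine ⟨fun i => K i ⊔ fromEdgeSet ↑(M i), ?_, ?_⟩
  · intro i
    have hfromle : fromEdgeSet (↑(M i) : Set (Sym2 V)) ≤ H := by
      intro u v hAdj
      obtain ⟨hmem, hne⟩ := (fromEdgeSet_adj _).mp hAdj
      exact (mem_edgeSet H).mp (hMH i _ hmem)
    -- key structural fact: endpoints of `M i` edges have at most one neighbour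
    have hnb : ∀ a b : V, s(a, b) ∈ M i →
        (K i ⊔ fromEdgeSet ↑(M i)).neighborSet a ⊆ {b} := by
      intro a b hab x hx
      rcases hx with hx | hx
      · exfalso
        have h4 := P4 i _ hab a (by simp)
        rw [Set.eq_empty_iff_forall_notMem] at h4
        exact h4 x hx
      · obtain ⟨hmem, hne⟩ := (fromEdgeSet_adj _).mp hx
        by_cases heq : s(a, x) = s(a, b)
        · rw [Sym2.congr_right] at heq
          exact heq
        · exfalso
          exact P5 i _ hmem _ hab heq a (by simp) (by simp)
    constructor
    · exact sup_le ((hKleG i).trans le_sup_left) (hfromle.trans le_sup_right)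
    constructor
    · -- acyclicity
      intro v c hc
      have hKac : (K i).IsAcyclic := isAcyclic_of_le (hKle i) (hF i).2.1
      have hedges : ∀ e ∈ c.edges, e ∈ (K i).edgeSet := by
        intro e he
        have hE : e ∈ (K i ⊔ fromEdgeSet ↑(M i)).edgeSet := c.edges_subset_edgeSet he
        rw [edgeSet_sup] at hE
        rcases hE with hE | hE
        · exact hE
        · exfalso
          rw [edgeSet_fromEdgeSet] at hE
          obtain ⟨hmem, _⟩ := hE
          induction e using Sym2.ind with
          | _ a b =>
          have hasupp : a ∈ c.support := Walk.fst_mem_support_of_mem_edges c he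
          refine no_cycle_through_deg_le_one hc hasupp ?_
          calc ((K i ⊔ fromEdgeSet ↑(M i)).neighborSet a).ncard
              ≤ ({b} : Set V).ncard :=
                Set.ncard_le_ncard (hnb a b hmem) (Set.finite_singleton b)
            _ = 1 := Set.ncard_singleton b
      exact hKac (c.transfer (K i) hedges) (hc.transfer hedges)
    · -- degree bound
      intro w
      by_cases hw : ∃ e ∈ M i, w ∈ e
      · obtain ⟨e, hei, hwe⟩ := hw
        obtain ⟨b, rfl⟩ : ∃ b, e = s(w, b) := ⟨Sym2.Mem.other hwe, (Sym2.other_spec hwe).symm⟩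
        calc deg (K i ⊔ fromEdgeSet ↑(M i)) w
            ≤ ({b} : Set V).ncard :=
              Set.ncard_le_ncard (hnb w b hei) (Set.finite_singleton b)
          _ ≤ 2 := by rw [Set.ncard_singleton]; omega
      · have hsub : (K i ⊔ fromEdgeSet ↑(M i)).neighborSet w ⊆ (K i).neighborSet w := by
          intro x hx
          rcases hx with hx | hx
          · exact hx
          · exfalso
            obtain ⟨hmem, _⟩ := (fromEdgeSet_adj _).mp hx
            exact hw ⟨s(w, x), hmem, by simp⟩
        calc deg (K i ⊔ fromEdgeSet ↑(M i)) w
            ≤ deg (K i) w := Set.ncard_le_ncard hsub (Set.toFinite _)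
          _ ≤ deg (F i) w := deg_le_of_le (hKle i) w
          _ ≤ 2 := (hF i).2.2 w
  · intro e he
    rw [edgeSet_sup] at he
    rcases he with he | he
    · exact Set.mem_iUnion.mpr ⟨idx e, edgeSet_mono le_sup_left (hKcov e he)⟩
    · obtain ⟨i, hi⟩ := P2 e (by rwa [Set.Finite.mem_toFinset])
      refine Set.mem_iUnion.mpr ⟨i, edgeSet_mono le_sup_right ?_⟩
      rw [edgeSet_fromEdgeSet]
      exact ⟨hi, H.not_isDiag_of_mem_edgeSet he⟩

end Paper
end

section
/- Let G be a graph on n vertices such that between every two disjoint vertex sets of size at least s there is an edge of G. Then any linear forest F in G with more than s path components can be extended, by adding edges of G between endpoints of distinct components, to a linear forest on the same vertex set with at most s components. -/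
open SimpleGraph Set

namespace Paper

variable {V : Type*}

/-- Helper A: in an acyclic graph, if `x` is a neighbour of `w` lying on a path
starting at `w`, then the edge `s(w,x)` is an edge of the path. -/
lemma edge_mem_of_mem_support {F : SimpleGraph V} (hac : F.IsAcyclic)
    {w u x : V} (q : F.Walk w u) (hq : q.IsPath) (hadj : F.Adj w x)
    (hxs : x ∈ q.support) : s(w, x) ∈ q.edges := by
  classical
  by_contra hne
  have hr : (q.takeUntil x hxs).IsPath := hq.takeUntil hxs
  have hre : s(x, w) ∉ (q.takeUntil x hxs).edges := by
    rw [Sym2.eq_swap]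
    exact fun h => hne (q.edges_takeUntil_subset hxs h)
  have : (SimpleGraph.Walk.cons hadj.symm (q.takeUntil x hxs)).IsCycle :=
    (SimpleGraph.Walk.cons_isCycle_iff _ _).2 ⟨hr, hre⟩
  exact hac _ this

/-- Helper: second vertex characterization. If `q` is a path starting at `w`
and `x, y` are both neighbours of `w` on `q`, then `x = y`. -/
lemma eq_of_neighbors_on_path {F : SimpleGraph V} (hac : F.IsAcyclic)
    {w u x y : V} (q : F.Walk w u) (hq : q.IsPath)
    (hx : F.Adj w x) (hy : F.Adj w y)
    (hxs : x ∈ q.support) (hys : y ∈ q.support) : x = y := by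
  have hex := edge_mem_of_mem_support hac q hq hx hxs
  have hey := edge_mem_of_mem_support hac q hq hy hys
  cases q with
  | nil =>
      simp only [SimpleGraph.Walk.edges_nil, List.not_mem_nil] at hex
  | @cons _ z₀ _ h' q₂ =>
      have hwq₂ : w ∉ q₂.support := by
        have := hq.support_nodup
        rw [SimpleGraph.Walk.support_cons, List.nodup_cons] at this
        exact this.1
      have hxz : x = z₀ := by
        rw [SimpleGraph.Walk.edges_cons, List.mem_cons] at hex
        rcases hex with hex | hex
        · rw [Sym2.eq_iff] at hex
          rcases hex with ⟨_, h2⟩ | ⟨h1, h2⟩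
          · exact h2
          · exact absurd h2.symm hx.ne
        · exact absurd (SimpleGraph.Walk.fst_mem_support_of_mem_edges q₂ hex) hwq₂
      have hyz : y = z₀ := by
        rw [SimpleGraph.Walk.edges_cons, List.mem_cons] at hey
        rcases hey with hey | hey
        · rw [Sym2.eq_iff] at hey
          rcases hey with ⟨_, h2⟩ | ⟨h1, h2⟩
          · exact h2
          · exact absurd h2.symm hy.ne
        · exact absurd (SimpleGraph.Walk.fst_mem_support_of_mem_edges q₂ hey) hwq₂
      rw [hxz, hyz]

/-- Helper B: every nontrivial component of an acyclic graph (on a finite vertex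
set) has two distinct endpoints of degree at most 1. -/
lemma exists_two_endpoints [Fintype V] {F : SimpleGraph V} (hac : F.IsAcyclic)
    (c : F.ConnectedComponent) (hc : (F.support ∩ c.supp).Nonempty) :
    ∃ a b : V, a ≠ b ∧ a ∈ F.support ∧ b ∈ F.support ∧ a ∈ c.supp ∧ b ∈ c.supp ∧
      deg F a ≤ 1 ∧ deg F b ≤ 1 := by
  classical
  obtain ⟨u, hus, huc⟩ := hc
  obtain ⟨v, huv⟩ := (F.mem_support).1 hus
  -- the set of lengths of paths starting in c.supp
  set S : Set ℕ := {n | ∃ (a b : V) (p : F.Walk a b), a ∈ c.supp ∧ p.IsPath ∧ p.length = n}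
    with hS
  have hone : (1 : ℕ) ∈ S := by
    refine ⟨u, v, SimpleGraph.Walk.cons huv SimpleGraph.Walk.nil, huc, ?_, rfl⟩
    simp [SimpleGraph.Walk.isPath_def, huv.ne]
  have hSne : S.Nonempty := ⟨1, hone⟩
  have hSbdd : BddAbove S := by
    refine ⟨Fintype.card V, fun n hn => ?_⟩
    obtain ⟨a, b, p, _, hp, rfl⟩ := hn
    exact le_of_lt hp.length_lt
  set N := sSup S with hN
  have hNS : N ∈ S := Nat.sSup_mem hSne hSbdd
  have hub : ∀ n ∈ S, n ≤ N := fun n hn => le_csSup hSbdd hn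
  have hN1 : 1 ≤ N := hub 1 hone
  obtain ⟨a, b, p, hap, hp, hplen⟩ := hNS
  -- key claim: endpoints of maximal paths have degree ≤ 1
  have key : ∀ (a' b' : V) (r : F.Walk a' b'), a' ∈ c.supp → r.IsPath →
      r.length = N → deg F b' ≤ 1 := by
    intro a' b' r ha' hr hrlen
    by_contra hdeg
    push_neg at hdeg
    obtain ⟨x, y, hxmem, hymem, hxy⟩ :=
      (Set.one_lt_ncard_iff (F.neighborSet b').toFinite).1 hdeg
    have hxadj : F.Adj b' x := hxmem
    have hyadj : F.Adj b' y := hymem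
    have hb'c : b' ∈ c.supp := by
      rw [SimpleGraph.ConnectedComponent.mem_supp_iff] at ha' ⊢
      rw [← ha']
      exact SimpleGraph.ConnectedComponent.sound r.reverse.reachable
    set q := r.reverse with hq
    have hqp : q.IsPath := hr.reverse
    have hmem : ∀ z : V, F.Adj b' z → z ∈ q.support := by
      intro z hz
      by_contra hzs
      have hcons : (SimpleGraph.Walk.cons hz.symm q).IsPath := hqp.cons hzs
      have hzc : z ∈ c.supp := by
        rw [SimpleGraph.ConnectedComponent.mem_supp_iff] at hb'c ⊢
        rw [← hb'c]
        exact SimpleGraph.ConnectedComponent.sound hz.symm.reachable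
      have : q.length + 1 ∈ S := ⟨z, a', SimpleGraph.Walk.cons hz.symm q, hzc, hcons, rfl⟩
      have := hub _ this
      rw [hq, SimpleGraph.Walk.length_reverse, hrlen] at this
      omega
    exact hxy (eq_of_neighbors_on_path hac q hqp hxadj hyadj (hmem x hxadj) (hmem y hyadj))
  have hane : a ≠ b := by
    intro h
    subst h
    have : p.length = 0 := by
      have := hp.support_nodup
      cases p with
      | nil => rfl
      | cons h' p' =>
          exfalso
          rw [SimpleGraph.Walk.support_cons, List.nodup_cons] at this
          exact this.1 p'.end_mem_support
    omega
  have hbc : b ∈ c.supp := by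
    rw [SimpleGraph.ConnectedComponent.mem_supp_iff] at hap ⊢
    rw [← hap]
    exact SimpleGraph.ConnectedComponent.sound p.reverse.reachable
  have hdegb : deg F b ≤ 1 := key a b p hap hp hplen
  have hdega : deg F a ≤ 1 := key b a p.reverse hbc hp.reverse
    (by rw [SimpleGraph.Walk.length_reverse]; exact hplen)
  have hasup : a ∈ F.support := by
    rw [SimpleGraph.mem_support]
    cases p with
    | nil => exact absurd rfl hane
    | cons h' p' => exact ⟨_, h'⟩
  have hbsup : b ∈ F.support := by
    rw [SimpleGraph.mem_support]
    cases hr : p.reverse with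
    | nil =>
        exfalso
        have : p.reverse.length = 0 := by rw [hr]; rfl
        rw [SimpleGraph.Walk.length_reverse] at this
        omega
    | cons h' p' => exact ⟨_, h'⟩
  exact ⟨a, b, hane, hasup, hbsup, hap, hbc, hdega, hdegb⟩

/-- Helper C: merging two components of a linear forest by an edge between
degree-≤1 support vertices. -/
lemma merge_step [Fintype V] {F : SimpleGraph V} (hF : IsLinearForest F)
    {x y : V} (hxy : ¬F.Reachable x y)
    (hdx : deg F x ≤ 1) (hdy : deg F y ≤ 1)
    (hsx : x ∈ F.support) (hsy : y ∈ F.support) :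
    IsLinearForest (F ⊔ edge x y) ∧ (F ⊔ edge x y).support = F.support ∧
      numComponents (F ⊔ edge x y) < numComponents F := by
  classical
  have hne : x ≠ y := fun h => hxy (h ▸ SimpleGraph.Reachable.refl x)
  set F' := F ⊔ edge x y with hF'
  have hadj' : F'.Adj x y := by
    rw [hF', sup_adj, edge_adj]
    exact Or.inr ⟨Or.inl ⟨rfl, rfl⟩, hne⟩
  -- acyclicity
  have hac : F'.IsAcyclic := by
    intro v c hc
    by_cases hmem : s(x, y) ∈ c.edges
    · have hxyF' : F'.Adj x y ∧ (F' \ fromEdgeSet {s(x, y)}).Reachable x y :=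
        SimpleGraph.adj_and_reachable_delete_edges_iff_exists_cycle.2 ⟨v, c, hc, hmem⟩
      have hle : F' \ fromEdgeSet {s(x, y)} ≤ F := by
        intro a b hab
        rw [sdiff_adj, hF', sup_adj] at hab
        rcases hab with ⟨hab1 | hab1, hab2⟩
        · exact hab1
        · exfalso
          rw [edge_adj] at hab1
          apply hab2
          rw [fromEdgeSet_adj]
          refine ⟨?_, hab1.2⟩
          rcases hab1.1 with ⟨rfl, rfl⟩ | ⟨rfl, rfl⟩
          · rfl
          · exact Sym2.eq_swap
      exact hxy (hxyF'.2.mono hle)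
    · have hsub : ∀ e ∈ c.edges, e ∈ F.edgeSet := by
        intro e he
        have : e ∈ F'.edgeSet := c.edges_subset_edgeSet he
        rw [hF', edgeSet_sup, edge_edgeSet_of_ne hne] at this
        rcases this with h | h
        · exact h
        · exact absurd (Set.mem_singleton_iff.1 h ▸ he) hmem
      exact hF.1 _ (hc.transfer hsub)
  -- degree bound
  have hdeg : ∀ v, deg F' v ≤ 2 := by
    intro v
    by_cases hvx : v = x
    · subst hvx
      have hsub : F'.neighborSet v ⊆ F.neighborSet v ∪ {y} := by
        intro w hw
        rcases (sup_adj _ _ _ _).1 hw with h | h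
        · exact Or.inl h
        · rw [edge_adj] at h
          rcases h.1 with ⟨_, rfl⟩ | ⟨rfl, rfl⟩
          · exact Or.inr rfl
          · exact Or.inr rfl
      calc deg F' v ≤ (F.neighborSet v ∪ {y}).ncard :=
              Set.ncard_le_ncard hsub ((F.neighborSet v).toFinite.union (Set.finite_singleton y))
        _ ≤ (F.neighborSet v).ncard + ({y} : Set V).ncard := Set.ncard_union_le _ _
        _ ≤ 1 + 1 := by
              have h1 : (F.neighborSet v).ncard ≤ 1 := hdx
              have h2 := Set.ncard_singleton y
              omega
        _ = 2 := rfl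
    · by_cases hvy : v = y
      · subst hvy
        have hsub : F'.neighborSet v ⊆ F.neighborSet v ∪ {x} := by
          intro w hw
          rcases (sup_adj _ _ _ _).1 hw with h | h
          · exact Or.inl h
          · rw [edge_adj] at h
            rcases h.1 with ⟨rfl, rfl⟩ | ⟨_, rfl⟩
            · exact Or.inr rfl
            · exact Or.inr rfl
        calc deg F' v ≤ (F.neighborSet v ∪ {x}).ncard :=
                Set.ncard_le_ncard hsub ((F.neighborSet v).toFinite.union (Set.finite_singleton x))
          _ ≤ (F.neighborSet v).ncard + ({x} : Set V).ncard := Set.ncard_union_le _ _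
          _ ≤ 1 + 1 := by
                have h1 : (F.neighborSet v).ncard ≤ 1 := hdy
                have h2 := Set.ncard_singleton x
                omega
          _ = 2 := rfl
      · have hsub : F'.neighborSet v = F.neighborSet v := by
          ext w
          constructor
          · intro hw
            rcases (sup_adj _ _ _ _).1 hw with h | h
            · exact h
            · rw [edge_adj] at h
              exfalso
              rcases h.1 with ⟨rfl, _⟩ | ⟨rfl, _⟩
              · exact hvx rfl
              · exact hvy rfl
          · intro hw
            exact (sup_adj _ _ _ _).2 (Or.inl hw)
        rw [deg, hsub]
        exact hF.2 v
  -- support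
  have hsupp : F'.support = F.support := by
    apply Set.Subset.antisymm
    · intro v hv
      obtain ⟨w, hw⟩ := (F'.mem_support).1 hv
      rcases (sup_adj _ _ _ _).1 hw with h | h
      · exact (F.mem_support).2 ⟨w, h⟩
      · rw [edge_adj] at h
        rcases h.1 with ⟨rfl, _⟩ | ⟨rfl, _⟩
        · exact hsx
        · exact hsy
    · exact support_mono le_sup_left
  -- number of components decreases
  refine ⟨⟨hac, hdeg⟩, hsupp, ?_⟩
  have hFle : F ≤ F' := le_sup_left
  set g : {c : F.ConnectedComponent // (F.support ∩ c.supp).Nonempty} →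
      {c : F'.ConnectedComponent // (F'.support ∩ c.supp).Nonempty} := fun c =>
    ⟨c.1.map (SimpleGraph.Hom.ofLE hFle), by
      obtain ⟨w, hws, hwc⟩ := c.2
      refine ⟨w, hsupp ▸ hws, ?_⟩
      rw [SimpleGraph.ConnectedComponent.mem_supp_iff] at hwc ⊢
      rw [← hwc]
      rfl⟩ with hg
  have hmk : ∀ v : V, (F.connectedComponentMk v).map (SimpleGraph.Hom.ofLE hFle)
      = F'.connectedComponentMk v := fun v => rfl
  have hgsurj : Function.Surjective g := by
    rintro ⟨c', hc'⟩
    obtain ⟨w, hws, hwc⟩ := hc'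
    have hwF : w ∈ F.support := hsupp ▸ hws
    refine ⟨⟨F.connectedComponentMk w, ⟨w, hwF, by rw [SimpleGraph.ConnectedComponent.mem_supp_iff]⟩⟩, ?_⟩
    apply Subtype.ext
    rw [SimpleGraph.ConnectedComponent.mem_supp_iff] at hwc
    simp only [hg, hmk w, hwc]
  have hgninj : ¬Function.Injective g := by
    intro hinj
    have hx1 : (F.support ∩ (F.connectedComponentMk x).supp).Nonempty :=
      ⟨x, hsx, by rw [SimpleGraph.ConnectedComponent.mem_supp_iff]⟩
    have hy1 : (F.support ∩ (F.connectedComponentMk y).supp).Nonempty :=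
      ⟨y, hsy, by rw [SimpleGraph.ConnectedComponent.mem_supp_iff]⟩
    have heq : g ⟨_, hx1⟩ = g ⟨_, hy1⟩ := by
      apply Subtype.ext
      simp only [hg, hmk]
      exact SimpleGraph.ConnectedComponent.sound hadj'.reachable
    have := hinj heq
    rw [Subtype.mk_eq_mk, SimpleGraph.ConnectedComponent.eq] at this
    exact hxy this
  have hfin1 : Finite {c : F.ConnectedComponent // (F.support ∩ c.supp).Nonempty} := by
    have : Finite F.ConnectedComponent := Finite.of_surjective _ (fun c => c.exists_rep)
    exact Subtype.finite
  have hfin2 : Finite {c : F'.ConnectedComponent // (F'.support ∩ c.supp).Nonempty} := by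
    have : Finite F'.ConnectedComponent := Finite.of_surjective _ (fun c => c.exists_rep)
    exact Subtype.finite
  have hle : numComponents F' ≤ numComponents F :=
    Nat.card_le_card_of_surjective g hgsurj
  rcases lt_or_eq_of_le hle with h | h
  · exact h
  · exfalso
    exact hgninj ((Nat.bijective_iff_surjective_and_card g).2 ⟨hgsurj, h.symm⟩).1

/-- if `G` has an edge between every two disjoint vertex sets of
size at least `s`, then any linear forest with more than `s` path components
can be extended, using edges of `G`, to a linear forest on the same vertex set
with at most `s` components. -/
theorem reduce_components_of_linear_forest [Fintype V]
    (G F : SimpleGraph V) (s : ℕ)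
    (hG : ∀ X Y : Set V, Disjoint X Y → s ≤ X.ncard → s ≤ Y.ncard →
      ∃ x ∈ X, ∃ y ∈ Y, G.Adj x y)
    (hF : IsLinearForest F) (hcomp : s < numComponents F) :
    ∃ F' : SimpleGraph V, F ≤ F' ∧ F' ≤ F ⊔ G ∧ IsLinearForest F' ∧
      F'.support = F.support ∧ numComponents F' ≤ s := by
  classical
  rcases Nat.eq_zero_or_pos s with rfl | hs
  · obtain ⟨x, hx, -⟩ := hG ∅ ∅ (disjoint_bot_left) (by simp) (by simp)
    exact absurd hx (Set.notMem_empty x)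
  suffices key : ∀ (n : ℕ) (F : SimpleGraph V), IsLinearForest F → numComponents F ≤ n →
      ∃ F' : SimpleGraph V, F ≤ F' ∧ F' ≤ F ⊔ G ∧ IsLinearForest F' ∧
        F'.support = F.support ∧ numComponents F' ≤ s by
    exact key (numComponents F) F hF le_rfl
  intro n
  induction n with
  | zero =>
      intro F hF hle
      exact ⟨F, le_rfl, le_sup_left, hF, rfl, by omega⟩
  | succ n ih =>
      intro F hF hle
      by_cases hdone : numComponents F ≤ s
      · exact ⟨F, le_rfl, le_sup_left, hF, rfl, hdone⟩
      push_neg at hdone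
      -- find an edge between endpoints of two distinct components
      set 𝒞 := {c : F.ConnectedComponent // (F.support ∩ c.supp).Nonempty} with h𝒞
      have hfinC : Finite F.ConnectedComponent :=
        Finite.of_surjective _ (fun c => c.exists_rep)
      have hfin : Finite 𝒞 := Subtype.finite
      have : Fintype 𝒞 := Fintype.ofFinite _
      have hend : ∀ c : 𝒞, ∃ a b : V, a ≠ b ∧ a ∈ F.support ∧ b ∈ F.support ∧
          a ∈ c.1.supp ∧ b ∈ c.1.supp ∧ deg F a ≤ 1 ∧ deg F b ≤ 1 :=
        fun c => exists_two_endpoints hF.1 c.1 c.2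
      choose e1 e2 hne12 hsup1 hsup2 hmem1 hmem2 hdeg1 hdeg2 using hend
      have hcardC : numComponents F = Fintype.card 𝒞 := by
        rw [numComponents, Nat.card_eq_fintype_card]
      set k := (s + 1) / 2 with hk
      have hk1 : 1 ≤ k := by omega
      have h2k : 2 * k ≤ s + 1 ∧ s ≤ 2 * k := by omega
      obtain ⟨t, -, htcard⟩ := Finset.exists_subset_card_eq
        (show 2 * k ≤ (Finset.univ : Finset 𝒞).card by
          rw [Finset.card_univ, ← hcardC]; omega)
      obtain ⟨t1, ht1, ht1card⟩ := Finset.exists_subset_card_eq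
        (show k ≤ t.card by omega)
      set t2 := t \ t1 with ht2
      have ht2card : t2.card = k := by
        rw [ht2, Finset.card_sdiff_of_subset ht1, htcard, ht1card]; omega
      have hdisj12 : Disjoint t1 t2 := Finset.disjoint_sdiff
      -- endpoint pair finsets
      set ep : 𝒞 → Finset V := fun c => {e1 c, e2 c} with hep
      have hepcard : ∀ c, (ep c).card = 2 := by
        intro c
        rw [hep]
        rw [Finset.card_insert_of_notMem (by simp [hne12 c]), Finset.card_singleton]
      have hepsupp : ∀ c : 𝒞, ∀ v ∈ ep c, v ∈ c.1.supp := by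
        intro c v hv
        rw [hep] at hv
        simp only [Finset.mem_insert, Finset.mem_singleton] at hv
        rcases hv with rfl | rfl
        · exact hmem1 c
        · exact hmem2 c
      have hepdisj : ∀ c d : 𝒞, c ≠ d → Disjoint (ep c) (ep d) := by
        intro c d hcd
        rw [Finset.disjoint_left]
        intro v hvc hvd
        have h1 := (SimpleGraph.ConnectedComponent.mem_supp_iff _ _).1 (hepsupp c v hvc)
        have h2 := (SimpleGraph.ConnectedComponent.mem_supp_iff _ _).1 (hepsupp d v hvd)
        exact hcd (Subtype.ext (h1 ▸ h2 ▸ rfl))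
      set X := t1.biUnion ep with hX
      set Y := t2.biUnion ep with hY
      have hXcard : X.card = 2 * k := by
        rw [hX, Finset.card_biUnion (fun c hc d hd hcd => hepdisj c d hcd)]
        rw [Finset.sum_congr rfl (fun c _ => hepcard c), Finset.sum_const, ht1card, smul_eq_mul]
        omega
      have hYcard : Y.card = 2 * k := by
        rw [hY, Finset.card_biUnion (fun c hc d hd hcd => hepdisj c d hcd)]
        rw [Finset.sum_congr rfl (fun c _ => hepcard c), Finset.sum_const, ht2card, smul_eq_mul]
        omega
      have hXYdisj : Disjoint X Y := by
        rw [Finset.disjoint_left]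
        intro v hvX hvY
        rw [hX, Finset.mem_biUnion] at hvX
        rw [hY, Finset.mem_biUnion] at hvY
        obtain ⟨c, hc1, hvc⟩ := hvX
        obtain ⟨d, hd2, hvd⟩ := hvY
        have hcd : c ≠ d := fun h => (Finset.disjoint_left.1 hdisj12) hc1 (h ▸ hd2)
        exact (Finset.disjoint_left.1 (hepdisj c d hcd)) hvc hvd
      obtain ⟨x, hxX, y, hyY, hGxy⟩ := hG ↑X ↑Y
        (by rwa [Finset.disjoint_coe])
        (by rw [Set.ncard_coe_finset, hXcard]; omega)
        (by rw [Set.ncard_coe_finset, hYcard]; omega)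
      rw [Finset.mem_coe, hX, Finset.mem_biUnion] at hxX
      rw [Finset.mem_coe, hY, Finset.mem_biUnion] at hyY
      obtain ⟨c, hct1, hxc⟩ := hxX
      obtain ⟨d, hdt2, hyd⟩ := hyY
      have hcd : c ≠ d := fun h => (Finset.disjoint_left.1 hdisj12) hct1 (h ▸ hdt2)
      have hreach : ¬F.Reachable x y := by
        intro hr
        have h1 := (SimpleGraph.ConnectedComponent.mem_supp_iff _ _).1 (hepsupp c x hxc)
        have h2 := (SimpleGraph.ConnectedComponent.mem_supp_iff _ _).1 (hepsupp d y hyd)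
        apply hcd
        apply Subtype.ext
        rw [← h1, ← h2]
        exact SimpleGraph.ConnectedComponent.sound hr
      have hxprop : x ∈ F.support ∧ deg F x ≤ 1 := by
        rw [hep] at hxc
        simp only [Finset.mem_insert, Finset.mem_singleton] at hxc
        rcases hxc with rfl | rfl
        · exact ⟨hsup1 c, hdeg1 c⟩
        · exact ⟨hsup2 c, hdeg2 c⟩
      have hyprop : y ∈ F.support ∧ deg F y ≤ 1 := by
        rw [hep] at hyd
        simp only [Finset.mem_insert, Finset.mem_singleton] at hyd
        rcases hyd with rfl | rfl
        · exact ⟨hsup1 d, hdeg1 d⟩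
        · exact ⟨hsup2 d, hdeg2 d⟩
      obtain ⟨hLF1, hsupp1, hlt1⟩ :=
        merge_step hF hreach hxprop.2 hyprop.2 hxprop.1 hyprop.1
      set F₁ := F ⊔ edge x y with hF₁
      obtain ⟨F'', h1, h2, h3, h4, h5⟩ := ih F₁ hLF1 (by omega)
      refine ⟨F'', le_trans le_sup_left h1, ?_, h3, by rw [h4, hsupp1], h5⟩
      have hedge : edge x y ≤ G := by
        intro a b hab
        rw [edge_adj] at hab
        rcases hab.1 with ⟨rfl, rfl⟩ | ⟨rfl, rfl⟩
        · exact hGxy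
        · exact hGxy.symm
      calc F'' ≤ F₁ ⊔ G := h2
        _ ≤ F ⊔ G := by
            rw [hF₁]
            exact sup_le (sup_le le_sup_left (le_trans hedge le_sup_right)) le_sup_right


end Paper
end
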